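/- Let v ∈ (0,1), let p, e ∈ ℝ² with p ≠ e, and let U ∈ ℝ² satisfy ‖U − e‖ = v·‖U − p‖. For t ∈ [0, ‖U − p‖), define the intermediate positions p_t := p + (t/‖U−p‖)·(U − p) (pursuer moving straight toward U at unit speed) and e_t := e + (v·t/‖U−e‖)·(U − e) (evader moving straight toward U at speed v). Then: (i) ‖U − e_t‖ = v·‖U − p_t‖, so U lies on the new Apollonius circle; and (ii) for every w ∈ ℝ², if ‖w − e_t‖ ≤ v·‖w − p_t‖ then ‖w − e‖ ≤ v·‖w − p‖, i.e., the new Apollonius disk is contained in the original one. -/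

import Mathlib

open Real MeasureTheory Filter

set_option maxHeartbeats 1000000 in
/-- If the pursuer and the evader both travel straight toward a point `U` on the
Apollonius circle, then `U` lies on every new Apollonius circle obtained from
simultaneous intermediate positions, and the new Apollonius disk is contained in the
original one. -/
theorem stmt_13 (v : ℝ) (hv0 : 0 < v) (hv1 : v < 1)
    (p e U : EuclideanSpace ℝ (Fin 2)) (hne : p ≠ e)
    (hU : ‖U - e‖ = v * ‖U - p‖)
    (t : ℝ) (ht0 : 0 ≤ t) (ht1 : t < ‖U - p‖)
    (pt et : EuclideanSpace ℝ (Fin 2))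
    (hpt : pt = p + (t / ‖U - p‖) • (U - p))
    (het : et = e + (v * t / ‖U - e‖) • (U - e)) :
    ‖U - et‖ = v * ‖U - pt‖ ∧
    ∀ w : EuclideanSpace ℝ (Fin 2), ‖w - et‖ ≤ v * ‖w - pt‖ → ‖w - e‖ ≤ v * ‖w - p‖ := by
  have hd : (0:ℝ) < ‖U - p‖ := lt_of_le_of_lt ht0 ht1
  have hs0 : 0 ≤ t / ‖U - p‖ := div_nonneg ht0 hd.le
  have hs1 : t / ‖U - p‖ < 1 := (div_lt_one hd).2 ht1
  set lam : ℝ := 1 - t / ‖U - p‖ with hlam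
  have hlam0 : 0 < lam := by simp only [hlam]; linarith
  have hlam1 : lam ≤ 1 := by simp only [hlam]; linarith
  have hcoef : v * t / ‖U - e‖ = t / ‖U - p‖ := by
    rw [hU, mul_div_mul_left _ _ (ne_of_gt hv0)]
  have hUpt : U - pt = lam • (U - p) := by
    rw [hpt, hlam, sub_smul, one_smul]
    abel
  have hUet : U - et = lam • (U - e) := by
    rw [het, hcoef, hlam, sub_smul, one_smul]
    abel
  have hnpt : ‖U - pt‖ = lam * ‖U - p‖ := by
    rw [hUpt, norm_smul, Real.norm_eq_abs, abs_of_pos hlam0]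
  have hnet : ‖U - et‖ = lam * ‖U - e‖ := by
    rw [hUet, norm_smul, Real.norm_eq_abs, abs_of_pos hlam0]
  constructor
  · rw [hnet, hnpt, hU]; ring
  · intro w hw
    have hwet : w - et = (w - U) + lam • (U - e) := by
      have : w - et = (w - U) + (U - et) := by abel
      rw [this, hUet]
    have hwpt : w - pt = (w - U) + lam • (U - p) := by
      have : w - pt = (w - U) + (U - pt) := by abel
      rw [this, hUpt]
    have hwe : w - e = (w - U) + (U - e) := by abel
    have hwp : w - p = (w - U) + (U - p) := by abel
    have hw2 : ‖w - et‖ ^ 2 ≤ (v * ‖w - pt‖) ^ 2 :=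
      pow_le_pow_left₀ (norm_nonneg _) hw 2
    have key : ‖w - e‖ ^ 2 ≤ (v * ‖w - p‖) ^ 2 := by
      rw [hwe, hwp, mul_pow, norm_add_sq_real, norm_add_sq_real, hU]
      rw [hwet, hwpt, mul_pow, norm_add_sq_real, norm_add_sq_real,
        real_inner_smul_right, real_inner_smul_right, norm_smul, norm_smul,
        Real.norm_eq_abs, abs_of_pos hlam0, hU] at hw2
      set N := ‖w - U‖ with hN
      set X : ℝ := inner ℝ (w - U) (U - e) with hX
      set Y : ℝ := inner ℝ (w - U) (U - p) with hY
      set D := ‖U - p‖ with hD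
      have hv2 : v ^ 2 < 1 := by nlinarith
      have h1 : (1 - v ^ 2) * N ^ 2 ≤ 2 * lam * (v ^ 2 * Y - X) := by nlinarith [hw2]
      have h2 : 0 ≤ v ^ 2 * Y - X := by
        by_contra h
        push_neg at h
        have hp : 0 < lam * (X - v ^ 2 * Y) := mul_pos hlam0 (by linarith)
        have hq : 0 ≤ (1 - v ^ 2) * N ^ 2 := mul_nonneg (by linarith) (sq_nonneg N)
        linarith [h1, hp, hq]
      linarith [h1, mul_nonneg (by linarith : (0:ℝ) ≤ 1 - lam) h2]
    have hrhs : 0 ≤ v * ‖w - p‖ := mul_nonneg hv0.le (norm_nonneg _)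
    exact (pow_le_pow_iff_left₀ (norm_nonneg _) hrhs two_ne_zero).mp key
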